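/- Let n ≥ 3 be an integer and define f(x,y) = (4x/(n+1)²)(n³+1) + (1 − 4x/(n+1)²)·n²(n+1)y/(n²(n−1)+y) − x for real x, y with y ≥ 0. Then for all real x, y with 0 ≤ x ≤ (n+1)²/4, 0 ≤ y ≤ (n⁴ − n³ + n²)/2 and x + y > 0, one has f(x,y)/(x+y) ≥ 2/n; moreover 2/n ≥ 2(n³ + 1 − ⌊c(n)⌋)/(n²(n² + 1)), where c(n) = n² − (√(8n² + 9) − 3)/2. -/

import Mathlib

set_option maxHeartbeats 1000000

/-- `c(n) = n² - (√(8n²+9) - 3)/2`. -/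
noncomputable def cFun (n : ℕ) : ℝ :=
  (n : ℝ) ^ 2 - (Real.sqrt (8 * (n : ℝ) ^ 2 + 9) - 3) / 2

/-- `f(x,y) = (4x/(n+1)²)(n³+1) + (1 - 4x/(n+1)²)·n²(n+1)y/(n²(n-1)+y) - x`. -/
noncomputable def fFun (n : ℕ) (x y : ℝ) : ℝ :=
  4 * x / ((n : ℝ) + 1) ^ 2 * ((n : ℝ) ^ 3 + 1) +
    (1 - 4 * x / ((n : ℝ) + 1) ^ 2) *
      ((n : ℝ) ^ 2 * ((n : ℝ) + 1) * y / ((n : ℝ) ^ 2 * ((n : ℝ) - 1) + y)) - x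

theorem f_lower_bound_case_one (n : ℕ) (hn : 3 ≤ n) :
    (∀ x y : ℝ, 0 ≤ x → x ≤ ((n : ℝ) + 1) ^ 2 / 4 → 0 ≤ y →
      y ≤ ((n : ℝ) ^ 4 - (n : ℝ) ^ 3 + (n : ℝ) ^ 2) / 2 → 0 < x + y →
      fFun n x y / (x + y) ≥ 2 / (n : ℝ)) ∧
    2 / (n : ℝ) ≥ 2 * ((n : ℝ) ^ 3 + 1 - (⌊cFun n⌋ : ℝ)) /
      ((n : ℝ) ^ 2 * ((n : ℝ) ^ 2 + 1)) := by
  have hN : (3:ℝ) ≤ (n:ℝ) := by exact_mod_cast hn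
  have hn0 : (0:ℝ) < (n:ℝ) := by linarith
  constructor
  · intro x y hx hx2 hy hy2 hxy
    have hD : (0:ℝ) < (n:ℝ)^2*((n:ℝ)-1)+y := by nlinarith
    set N := (n:ℝ) with hNdef
    have hP : 0 ≤ N^2*(N-1)*(4*N^4-N^3-4*N^2-N-2) * x + N^2*(N+1)^2*(N^2-N+2) * y
        - (5*N^3+4*N^2+N+2) * x * y - 2*(N+1)^2 * y^2 := by
      have hy3 : 0 ≤ y * ((N ^ 4 - N ^ 3 + N ^ 2) / 2 - y) :=
        mul_nonneg hy (by linarith)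
      have hBy : 0 ≤ y * ((N+1)^2 * (N^2*(N^2-N+2) - 2*y)) :=
        mul_nonneg hy (mul_nonneg (sq_nonneg _) (by nlinarith [sq_nonneg N]))
      have hA : (0:ℝ) ≤ 4*N^4-N^3-4*N^2-N-2 := by
        nlinarith [mul_nonneg (by linarith : (0:ℝ) ≤ N-3) (by positivity : (0:ℝ) ≤ N^3),
          mul_nonneg (by linarith : (0:ℝ) ≤ N-3) (by positivity : (0:ℝ) ≤ N^2),
          mul_nonneg (by linarith : (0:ℝ) ≤ N-3) hn0.le]
      rcases le_or_gt ((5*N^3+4*N^2+N+2) * y) (N^2*(N-1)*(4*N^4-N^3-4*N^2-N-2)) with h | h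
      · have h1 : 0 ≤ x * (N^2*(N-1)*(4*N^4-N^3-4*N^2-N-2) - (5*N^3+4*N^2+N+2) * y) :=
          mul_nonneg hx (by linarith)
        linarith [h1, hBy]
      · have hym : (0:ℝ) < (N ^ 4 - N ^ 3 + N ^ 2) / 2 := by nlinarith [sq_nonneg N, pow_pos hn0 2]
        have hx3 : 0 ≤ ((N+1)^2/4 - x) * ((5*N^3+4*N^2+N+2)*y - N^2*(N-1)*(4*N^4-N^3-4*N^2-N-2)) :=
          mul_nonneg (by linarith) (by linarith)
        have h27 : (27:ℝ) ≤ N^3 := by nlinarith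
        have hq : (0:ℝ) ≤ 3*N^9+N^8-19*N^7-24*N^6-3*N^5+5*N^4+3*N^3+2*N^2 := by
          have t1 : (0:ℝ) ≤ 3*N^9 - 27*N^7 := by
            have e : 3*N^9 - 27*N^7 = 3*N^7*((N-3)*(N+3)) := by ring
            rw [e]; exact mul_nonneg (by positivity) (mul_nonneg (by linarith) (by linarith))
          have t2 : (0:ℝ) ≤ 8*N^7 - 24*N^6 := by
            have e : 8*N^7 - 24*N^6 = 8*N^6*(N-3) := by ring
            rw [e]; exact mul_nonneg (by positivity) (by linarith)
          have t3 : (0:ℝ) ≤ N^8 - 3*N^5 := by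
            have e : N^8 - 3*N^5 = N^5*(N^3-3) := by ring
            rw [e]; exact mul_nonneg (by positivity) (by linarith)
          linarith [t1, t2, t3, pow_pos hn0 4, pow_pos hn0 3, pow_pos hn0 2]
        have hR0 : (0:ℝ) ≤ (N+1)^2 * (N^2*(N-1)*(4*N^4-N^3-4*N^2-N-2)) :=
          mul_nonneg (sq_nonneg _)
            (mul_nonneg (mul_nonneg (sq_nonneg _) (by linarith)) hA)
        have c1 := mul_nonneg hx3 hym.le
        have c2 := mul_nonneg hy hq
        have c3 := mul_nonneg (by linarith : (0:ℝ) ≤ (N ^ 4 - N ^ 3 + N ^ 2) / 2 - y) hR0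
        have c4 := mul_nonneg (mul_nonneg (sq_nonneg (N+1)) hym.le) hy3
        have key : (N^2*(N-1)*(4*N^4-N^3-4*N^2-N-2) * x + N^2*(N+1)^2*(N^2-N+2) * y
              - (5*N^3+4*N^2+N+2) * x * y - 2*(N+1)^2 * y^2) * ((N ^ 4 - N ^ 3 + N ^ 2) / 2)
            = ((N+1)^2/4 - x) * ((5*N^3+4*N^2+N+2)*y - N^2*(N-1)*(4*N^4-N^3-4*N^2-N-2))
                * ((N ^ 4 - N ^ 3 + N ^ 2) / 2)
              + ((N ^ 4 - N ^ 3 + N ^ 2) / 2 - y) * ((N+1)^2 * (N^2*(N-1)*(4*N^4-N^3-4*N^2-N-2))) / 4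
              + y * (3*N^9+N^8-19*N^7-24*N^6-3*N^5+5*N^4+3*N^3+2*N^2) / 8
              + 2 * ((N+1)^2 * ((N ^ 4 - N ^ 3 + N ^ 2) / 2) * (y * ((N ^ 4 - N ^ 3 + N ^ 2) / 2 - y))) := by
          ring
        have hPm : 0 ≤ (N^2*(N-1)*(4*N^4-N^3-4*N^2-N-2) * x + N^2*(N+1)^2*(N^2-N+2) * y
              - (5*N^3+4*N^2+N+2) * x * y - 2*(N+1)^2 * y^2) * ((N ^ 4 - N ^ 3 + N ^ 2) / 2) := by
          rw [key]; linarith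
        rw [mul_comm] at hPm
        exact nonneg_of_mul_nonneg_right hPm hym
    rw [ge_iff_le, div_le_div_iff₀ hn0 hxy]
    have heq : fFun n x y * N =
        ((4 * x * (N ^ 3 + 1) * (N ^ 2 * (N - 1) + y) +
          ((N+1)^2 - 4 * x) * (N ^ 2 * (N + 1) * y) -
          x * (N+1)^2 * (N ^ 2 * (N - 1) + y)) * N) /
        ((N+1)^2 * (N ^ 2 * (N - 1) + y)) := by
      unfold fFun; rw [← hNdef]; field_simp
    rw [heq, le_div_iff₀ (by positivity)]
    have hid : (4 * x * (N ^ 3 + 1) * (N ^ 2 * (N - 1) + y) +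
          ((N+1)^2 - 4 * x) * (N ^ 2 * (N + 1) * y) -
          x * (N+1)^2 * (N ^ 2 * (N - 1) + y)) * N
        - 2 * (x + y) * ((N+1)^2 * (N ^ 2 * (N - 1) + y))
        = N^2*(N-1)*(4*N^4-N^3-4*N^2-N-2) * x + N^2*(N+1)^2*(N^2-N+2) * y
        - (5*N^3+4*N^2+N+2) * x * y - 2*(N+1)^2 * y^2 := by ring
    linarith [hP, hid]
  · have hc : (0:ℝ) ≤ cFun n := by
      have hs : Real.sqrt (8 * (n : ℝ) ^ 2 + 9) ≤ 2 * (n:ℝ)^2 + 3 := by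
        have h1 : Real.sqrt (8 * (n : ℝ) ^ 2 + 9) ≤ Real.sqrt ((2 * (n:ℝ)^2 + 3)^2) :=
          Real.sqrt_le_sqrt (by nlinarith [sq_nonneg ((n:ℝ)^2)])
        simpa [Real.sqrt_sq (by positivity : (0:ℝ) ≤ 2 * (n:ℝ)^2 + 3)] using h1
      unfold cFun
      linarith
    have hfl : (0:ℝ) ≤ (⌊cFun n⌋ : ℝ) := by
      exact_mod_cast Int.le_floor.mpr (by exact_mod_cast hc)
    rw [ge_iff_le, div_le_div_iff₀ (by positivity) hn0]
    nlinarith [hfl, mul_nonneg hfl hn0.le, sq_nonneg ((n:ℝ)-1), pow_pos hn0 2]
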